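/- Let S be a 0-rectangular band whose nonzero D-class D is an m × n array with n = am for some positive integer a, and suppose S has a permutation matching φ. Then for any set T of t rows of D (1 ≤ t ≤ m), the number of columns containing an idempotent lying in a row of T is at least ta; and for any set T of t columns (1 ≤ t ≤ n), the number of rows containing an idempotent lying in a column of T is at least t/a. -/

import Mathlib

/-- Lemma 2.2: in an m × (a·m) 0-rectangular band with idempotent set E and a permutation
matching φ, any t rows meet idempotents in at least t·a columns, and any t columns meet
idempotents in at least t/a rows. -/
theorem rows_columns_idempotent_bounds (m n a : ℕ) (hm : 0 < m) (ha : 0 < a)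
    (hn : n = a * m) (E : Set (Fin m × Fin n))
    (φ : Equiv.Perm (Option (Fin m × Fin n))) (hφ0 : φ none = none)
    (hφ : ∀ p : Fin m × Fin n, ∃ q : Fin m × Fin n,
      φ (some p) = some q ∧ (p.1, q.2) ∈ E ∧ (q.1, p.2) ∈ E) :
    (∀ T : Finset (Fin m), T.Nonempty →
      T.card * a ≤ Set.ncard {c : Fin n | ∃ r ∈ T, (r, c) ∈ E}) ∧
    (∀ T : Finset (Fin n), T.Nonempty →
      T.card ≤ a * Set.ncard {r : Fin m | ∃ c ∈ T, (r, c) ∈ E}) := by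
  classical
  subst hn
  obtain ⟨f, hf⟩ : ∃ f : Fin m × Fin (a*m) → Fin m × Fin (a*m),
      ∀ p, φ (some p) = some (f p) ∧ (p.1, (f p).2) ∈ E ∧ ((f p).1, p.2) ∈ E := by
    choose f h1 h2 h3 using hφ
    exact ⟨f, fun p => ⟨h1 p, h2 p, h3 p⟩⟩
  have hfinj : Function.Injective f := by
    intro p q h
    have : φ (some p) = φ (some q) := by rw [(hf p).1, (hf q).1, h]
    exact Option.some_injective _ (φ.injective this)
  constructor
  · intro T hT
    set C := Finset.univ.filter (fun c : Fin (a*m) => ∃ r ∈ T, (r, c) ∈ E) with hC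
    have hset : {c : Fin (a*m) | ∃ r ∈ T, (r, c) ∈ E} = ↑C := by
      ext c; simp [hC]
    rw [hset, Set.ncard_coe_finset]
    have hcard : (T ×ˢ (Finset.univ : Finset (Fin (a*m)))).card ≤
        ((Finset.univ : Finset (Fin m)) ×ˢ C).card := by
      apply Finset.card_le_card_of_injOn f
      · intro p hp
        simp only [Finset.mem_coe, Finset.mem_product, Finset.mem_univ, true_and, and_true] at hp
        simp only [Finset.mem_coe, Finset.mem_product, Finset.mem_univ, true_and, hC,
          Finset.mem_filter]
        exact ⟨p.1, hp, (hf p).2.1⟩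
      · intro p _ q _ h; exact hfinj h
    simp only [Finset.card_product, Finset.card_univ, Fintype.card_fin] at hcard
    have h2 : m * (T.card * a) ≤ m * C.card := by
      calc m * (T.card * a) = T.card * (a * m) := by ring
        _ ≤ m * C.card := hcard
    exact Nat.le_of_mul_le_mul_left h2 hm
  · intro T hT
    set R := Finset.univ.filter (fun r : Fin m => ∃ c ∈ T, (r, c) ∈ E) with hR
    have hset : {r : Fin m | ∃ c ∈ T, (r, c) ∈ E} = ↑R := by
      ext r; simp [hR]
    rw [hset, Set.ncard_coe_finset]
    have hcard : (((Finset.univ : Finset (Fin m))) ×ˢ T).card ≤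
        (R ×ˢ (Finset.univ : Finset (Fin (a*m)))).card := by
      apply Finset.card_le_card_of_injOn f
      · intro p hp
        simp only [Finset.mem_coe, Finset.mem_product, Finset.mem_univ, true_and] at hp
        simp only [Finset.mem_coe, Finset.mem_product, Finset.mem_univ, and_true, hR,
          Finset.mem_filter]
        exact ⟨trivial, p.2, hp, (hf p).2.2⟩
      · intro p _ q _ h; exact hfinj h
    simp only [Finset.card_product, Finset.card_univ, Fintype.card_fin] at hcard
    have h2 : m * T.card ≤ m * (a * R.card) := by
      calc m * T.card ≤ R.card * (a * m) := hcard
        _ = m * (a * R.card) := by ring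
    exact Nat.le_of_mul_le_mul_left h2 hm
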